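/- Let Z be a commutative Noetherian domain of Krull dimension one over an algebraically closed field k with dim_k Z < card k, and suppose x ∈ Z is transcendental over k. Then the set {λ ∈ k : (x - λ)Z ≠ Z} has cardinality equal to card k. -/
import Mathlib


universe u v

/-- Let `Z` be a commutative Noetherian domain of Krull dimension one over an
algebraically closed field `k` with `dim_k Z < card k`, and let `x ∈ Z` be
transcendental over `k`.  Then the set `{λ ∈ k : (x - λ)Z ≠ Z}` has
cardinality `card k`. -/
theorem stmt16 (k : Type u) (Z : Type v) [Field k] [IsAlgClosed k]
    [CommRing Z] [IsDomain Z] [IsNoetherianRing Z] [Algebra k Z]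
    (hdim : ringKrullDim Z = 1)
    (hcard : Cardinal.lift.{u} (Module.rank k Z) < Cardinal.lift.{v} (Cardinal.mk k))
    (x : Z) (hx : Transcendental k x) :
    Cardinal.mk {lam : k // Ideal.span {x - algebraMap k Z lam} ≠ ⊤} = Cardinal.mk k := by
  classical
  set K := FractionRing Z
  -- the "good" set of λ where x - λ is a unit
  set G : Set k := {lam : k | Ideal.span {x - algebraMap k Z lam} = ⊤} with hG
  -- x is transcendental in K
  have hinj : Function.Injective (algebraMap Z K) :=
    IsFractionRing.injective Z K
  have hx' : Transcendental k (algebraMap Z K x) :=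
    (transcendental_algebraMap_iff (A := K) hinj).mpr hx
  -- linear independence of resolvents in K
  have li : LinearIndependent k fun a : k ↦ ((algebraMap Z K x) - algebraMap k K a)⁻¹ :=
    hx'.linearIndependent_sub_inv
  -- for λ ∈ G, the inverse of x - λ in Z
  have hunit : ∀ lam : G, IsUnit (x - algebraMap k Z lam.1) := fun lam ↦
    Ideal.span_singleton_eq_top.mp lam.2
  set g : G → Z := fun lam ↦ ↑(hunit lam).unit⁻¹ with hgdef
  have hgmap : ∀ lam : G, algebraMap Z K (g lam)
      = ((algebraMap Z K x) - algebraMap k K lam.1)⁻¹ := by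
    intro lam
    have h1 : algebraMap k K lam.1 = algebraMap Z K (algebraMap k Z lam.1) :=
      (IsScalarTower.algebraMap_apply k Z K lam.1)
    rw [h1, ← map_sub]
    refine (eq_inv_of_mul_eq_one_left ?_)
    rw [← map_mul]
    have : (↑(hunit lam).unit⁻¹ : Z) * (x - algebraMap k Z lam.1) = 1 := by
      have := (hunit lam).unit.inv_mul
      simpa using this
    rw [hgdef]
    simp only [this, map_one]
  have lig : LinearIndependent k g := by
    apply LinearIndependent.of_comp ((Algebra.linearMap Z K).restrictScalars k)
    have : ⇑((Algebra.linearMap Z K).restrictScalars k) ∘ g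
        = (fun a : k ↦ ((algebraMap Z K x) - algebraMap k K a)⁻¹) ∘ Subtype.val := by
      funext lam; exact hgmap lam
    rw [this]
    exact li.comp Subtype.val Subtype.val_injective
  -- cardinality bound on G
  have hGcard : Cardinal.mk G < Cardinal.mk k := by
    have h1 := lig.cardinal_lift_le_rank
    rw [← Cardinal.lift_lt.{u, v}]
    calc Cardinal.lift.{v} (Cardinal.mk G) ≤ Cardinal.lift.{u} (Module.rank k Z) := h1
      _ < Cardinal.lift.{v} (Cardinal.mk k) := hcard
  -- k is infinite
  have hkinf : Infinite k := inferInstance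
  have hsum : Cardinal.mk G + Cardinal.mk (↥Gᶜ) = Cardinal.mk k := Cardinal.mk_sum_compl G
  have hcompl : Cardinal.mk (↥Gᶜ) = Cardinal.mk k := by
    by_contra h
    have hle : Cardinal.mk (↥Gᶜ) ≤ Cardinal.mk k := Cardinal.mk_subtype_le _
    have hlt : Cardinal.mk (↥Gᶜ) < Cardinal.mk k := lt_of_le_of_ne hle h
    have : Cardinal.mk G + Cardinal.mk (↥Gᶜ) < Cardinal.mk k :=
      Cardinal.add_lt_of_lt (Cardinal.infinite_iff.mp hkinf) hGcard hlt
    rw [hsum] at this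
    exact lt_irrefl _ this
  rw [← hcompl]
  apply Cardinal.mk_congr
  exact Equiv.subtypeEquivRight (fun lam ↦ by simp [hG, Set.mem_compl_iff])
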